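/- Let ι be a nonempty finite index type and for each i ∈ ι let (S i, A i, P i, J i, γ) be a finite MDP with common discount factor γ ∈ [0,1). Suppose for each i the policy π_i : S i → A i is optimal for the i-th sub-MDP, i.e., its value function V_i^{π_i} equals the local optimal value function V_i*. Then the product policy π on the product MDP, defined by (π s) i = π_i (s i), is optimal for the product MDP: its value function V^π equals the optimal value function V* of the product MDP, and moreover V*(s) = ∑_{i ∈ ι} V_i*(s i) for all s ∈ ∏ i, S i. -/
import Mathlib

open Finset

lemma my_sum_pi_prod {ι : Type*} [Fintype ι] [DecidableEq ι] (S : ι → Type*) [∀ i, Fintype (S i)]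
    (p : ∀ i, S i → ℝ) :
    ∑ s' : ∀ i, S i, (∏ i, p i (s' i)) = ∏ i, ∑ y, p i y := by
  rw [Finset.prod_univ_sum, Fintype.piFinset_univ]

lemma my_sum_pi_prod_mul {ι : Type*} [Fintype ι] [DecidableEq ι] (S : ι → Type*)
    [∀ i, Fintype (S i)]
    (p : ∀ i, S i → ℝ) (hp1 : ∀ i, ∑ y, p i y = 1) (j : ι) (q : S j → ℝ) :
    ∑ s' : ∀ i, S i, (∏ i, p i (s' i)) * q (s' j) = ∑ y, p j y * q y := by
  classical
  have key : ∀ s' : ∀ i, S i, (∏ i, p i (s' i)) * q (s' j)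
      = ∏ i, (p i (s' i) * (if h : i = j then q (h ▸ (s' i)) else 1)) := by
    intro s'
    rw [Finset.prod_mul_distrib]
    congr 1
    rw [Finset.prod_eq_single j]
    · simp
    · intro b _ hb; simp [hb]
    · simp
  calc ∑ s' : ∀ i, S i, (∏ i, p i (s' i)) * q (s' j)
      = ∑ s' : ∀ i, S i, ∏ i, (p i (s' i) * (if h : i = j then q (h ▸ (s' i)) else 1)) := by
        exact Finset.sum_congr rfl fun s' _ => key s'
    _ = ∏ i, ∑ y : S i, (p i y * (if h : i = j then q (h ▸ y) else 1)) :=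
        my_sum_pi_prod S (fun i y => p i y * (if h : i = j then q (h ▸ y) else 1))
    _ = ∑ y, p j y * q y := by
        rw [Finset.prod_eq_single j]
        · simp
        · intro b _ hb; simp [hb, hp1 b]
        · simp

lemma my_inf'_sum_pi {ι : Type*} [Fintype ι] [DecidableEq ι] [Nonempty ι] (A : ι → Type*)
    [∀ i, Fintype (A i)] [∀ i, Nonempty (A i)] (f : ∀ i, A i → ℝ) :
    Finset.univ.inf' Finset.univ_nonempty (fun a : ∀ i, A i => ∑ i, f i (a i))
      = ∑ i, Finset.univ.inf' Finset.univ_nonempty (fun b => f i b) := by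
  apply le_antisymm
  · choose b hb hb2 using fun i => Finset.exists_mem_eq_inf' (Finset.univ_nonempty) (f i)
    calc Finset.univ.inf' Finset.univ_nonempty (fun a : ∀ i, A i => ∑ i, f i (a i))
        ≤ ∑ i, f i (b i) := Finset.inf'_le _ (Finset.mem_univ _)
      _ = _ := by exact Finset.sum_congr rfl fun i _ => (hb2 i).symm
  · apply Finset.le_inf'
    intro a _
    exact Finset.sum_le_sum fun i _ => Finset.inf'_le _ (Finset.mem_univ _)

lemma my_abs_inf'_sub_le {α : Type*} [Fintype α] [Nonempty α] (f g : α → ℝ) (M : ℝ)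
    (h : ∀ a, |f a - g a| ≤ M) :
    |Finset.univ.inf' Finset.univ_nonempty f - Finset.univ.inf' Finset.univ_nonempty g| ≤ M := by
  rw [abs_sub_le_iff]
  constructor
  · obtain ⟨b, -, hb⟩ := Finset.exists_mem_eq_inf' Finset.univ_nonempty g
    have h1 := Finset.inf'_le f (Finset.mem_univ b)
    have hab := abs_sub_le_iff.mp (h b)
    rw [hb]; linarith [hab.1]
  · obtain ⟨b, -, hb⟩ := Finset.exists_mem_eq_inf' Finset.univ_nonempty f
    have h1 := Finset.inf'_le g (Finset.mem_univ b)
    have hab := abs_sub_le_iff.mp (h b)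
    rw [hb]; linarith [hab.2]

lemma my_contraction_eq {σ : Type*} [Fintype σ] [Nonempty σ] (γ : ℝ) (hγ1 : γ < 1)
    (V W : σ → ℝ)
    (h : ∀ s, |V s - W s| ≤ γ * Finset.univ.sup' Finset.univ_nonempty (fun t => |V t - W t|)) :
    ∀ s, V s = W s := by
  set M := Finset.univ.sup' Finset.univ_nonempty (fun t => |V t - W t|) with hMdef
  have hM : M ≤ γ * M := Finset.sup'_le _ _ (fun s _ => h s)
  have hM0 : 0 ≤ M := le_trans (abs_nonneg _)
    (Finset.le_sup' (fun t => |V t - W t|) (Finset.mem_univ (Classical.arbitrary σ)))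
  have hMle : M ≤ 0 := by nlinarith
  intro s
  have h1 := h s
  have h2 := abs_nonneg (V s - W s)
  have : |V s - W s| = 0 := by nlinarith
  have := abs_eq_zero.mp this
  linarith

lemma my_weighted_abs_le {σ : Type*} [Fintype σ] (c d : σ → ℝ) (M : ℝ)
    (hc0 : ∀ s, 0 ≤ c s) (hc1 : ∑ s, c s = 1) (hd : ∀ s, |d s| ≤ M) :
    |∑ s, c s * d s| ≤ M := by
  calc |∑ s, c s * d s| ≤ ∑ s, |c s * d s| := Finset.abs_sum_le_sum_abs _ _
    _ = ∑ s, c s * |d s| :=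
        Finset.sum_congr rfl fun s _ => by rw [abs_mul, abs_of_nonneg (hc0 s)]
    _ ≤ ∑ s, c s * M := Finset.sum_le_sum fun s _ => mul_le_mul_of_nonneg_left (hd s) (hc0 s)
    _ = M := by rw [← Finset.sum_mul, hc1, one_mul]



/-- Policy Equivalence under Probabilistic Independence (the paper's
Theorem 1): if each local policy `πᵢ` is optimal for its sub-MDP (its value
function equals the local optimal value function `Vᵢ*`), then the product
policy `(π s) i = πᵢ (s i)` is optimal for the product MDP: its value function
equals the optimal value function `V*` of the product MDP, and moreover
`V*(s) = ∑ i, Vᵢ*(s i)`. -/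
theorem product_policy_optimal
    {ι : Type*} [Fintype ι] [DecidableEq ι] [Nonempty ι]
    (S A : ι → Type*)
    [∀ i, Fintype (S i)] [∀ i, Nonempty (S i)]
    [∀ i, Fintype (A i)] [∀ i, Nonempty (A i)]
    (P : ∀ i, S i → A i → S i → ℝ)
    (hP0 : ∀ i, ∀ (x : S i) (b : A i) (y : S i), 0 ≤ P i x b y)
    (hP1 : ∀ i, ∀ (x : S i) (b : A i), ∑ y : S i, P i x b y = 1)
    (J : ∀ i, S i → A i → ℝ)
    (γ : ℝ) (hγ0 : 0 ≤ γ) (hγ1 : γ < 1)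
    -- `Vistar i` is the (unique) fixed point of the `i`-th local Bellman
    -- optimality operator, i.e. the local optimal value function:
    (Vistar : ∀ i, S i → ℝ)
    (hVistar : ∀ i, ∀ x : S i,
      Vistar i x = Finset.univ.inf' Finset.univ_nonempty
        (fun b : A i => J i x b + γ * ∑ y : S i, P i x b y * Vistar i y))
    -- local stationary deterministic policies and their value functions
    -- (unique fixed points of the local policy-evaluation operators):
    (π : ∀ i, S i → A i)
    (Viπ : ∀ i, S i → ℝ)
    (hViπ : ∀ i, ∀ x : S i,
      Viπ i x = J i x (π i x) + γ * ∑ y : S i, P i x (π i x) y * Viπ i y)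
    -- each local policy is optimal for its sub-MDP:
    (hopt : ∀ i, ∀ x : S i, Viπ i x = Vistar i x)
    -- `Vstar` is the (unique) fixed point of the Bellman optimality operator
    -- of the product MDP, i.e. its optimal value function:
    (Vstar : (∀ i, S i) → ℝ)
    (hVstar : ∀ s : ∀ i, S i,
      Vstar s = Finset.univ.inf' Finset.univ_nonempty
        (fun a : ∀ i, A i =>
          (∑ i, J i (s i) (a i)) +
            γ * ∑ s' : ∀ i, S i, (∏ i, P i (s i) (a i) (s' i)) * Vstar s'))
    -- `Vπ` is the value function of the product policy `(π s) i = π i (s i)`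
    -- in the product MDP (unique fixed point of its policy-evaluation operator):
    (Vπ : (∀ i, S i) → ℝ)
    (hVπ : ∀ s : ∀ i, S i,
      Vπ s = (∑ i, J i (s i) (π i (s i))) +
        γ * ∑ s' : ∀ i, S i, (∏ i, P i (s i) (π i (s i)) (s' i)) * Vπ s') :
    (∀ s : ∀ i, S i, Vπ s = Vstar s) ∧
      ∀ s : ∀ i, S i, Vstar s = ∑ i, Vistar i (s i) := by
  classical
  set W : (∀ i, S i) → ℝ := fun s => ∑ i, Vistar i (s i) with hWdef
  -- each local policy's fixed-point equation in terms of Vistar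
  have hVistarπ : ∀ i, ∀ x : S i,
      Vistar i x = J i x (π i x) + γ * ∑ y : S i, P i x (π i x) y * Vistar i y := by
    intro i x
    have := hViπ i x
    simp only [hopt] at this
    exact this
  -- transitions of the product MDP are a probability distribution
  have hprob1 : ∀ (s : ∀ i, S i) (a : ∀ i, A i),
      ∑ s' : ∀ i, S i, (∏ i, P i (s i) (a i) (s' i)) = 1 := by
    intro s a
    rw [my_sum_pi_prod S (fun i y => P i (s i) (a i) y)]
    exact Finset.prod_eq_one fun i _ => hP1 i (s i) (a i)
  have hprob0 : ∀ (s : ∀ i, S i) (a : ∀ i, A i) (s' : ∀ i, S i),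
      0 ≤ ∏ i, P i (s i) (a i) (s' i) :=
    fun s a s' => Finset.prod_nonneg fun i _ => hP0 i (s i) (a i) (s' i)
  -- key factorization of expectations of W
  have fact1 : ∀ (s : ∀ i, S i) (a : ∀ i, A i),
      ∑ s' : ∀ i, S i, (∏ i, P i (s i) (a i) (s' i)) * W s'
        = ∑ i, ∑ y : S i, P i (s i) (a i) y * Vistar i y := by
    intro s a
    calc ∑ s' : ∀ i, S i, (∏ i, P i (s i) (a i) (s' i)) * W s'
        = ∑ s' : ∀ i, S i, ∑ i, (∏ i, P i (s i) (a i) (s' i)) * Vistar i (s' i) := by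
          simp only [hWdef, Finset.mul_sum]
      _ = ∑ i, ∑ s' : ∀ i, S i, (∏ i, P i (s i) (a i) (s' i)) * Vistar i (s' i) :=
          Finset.sum_comm
      _ = ∑ i, ∑ y : S i, P i (s i) (a i) y * Vistar i y :=
          Finset.sum_congr rfl fun i _ =>
            my_sum_pi_prod_mul S (fun i y => P i (s i) (a i) y)
              (fun i => hP1 i (s i) (a i)) i (Vistar i)
  -- W satisfies the product Bellman optimality equation
  have fact3 : ∀ s : ∀ i, S i,
      W s = Finset.univ.inf' Finset.univ_nonempty
        (fun a : ∀ i, A i =>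
          (∑ i, J i (s i) (a i)) +
            γ * ∑ s' : ∀ i, S i, (∏ i, P i (s i) (a i) (s' i)) * W s') := by
    intro s
    have heq : (fun a : ∀ i, A i =>
        (∑ i, J i (s i) (a i)) +
          γ * ∑ s' : ∀ i, S i, (∏ i, P i (s i) (a i) (s' i)) * W s')
        = fun a : ∀ i, A i =>
          ∑ i, (J i (s i) (a i) + γ * ∑ y : S i, P i (s i) (a i) y * Vistar i y) := by
      funext a
      rw [fact1 s a, Finset.mul_sum, ← Finset.sum_add_distrib]
    rw [heq, my_inf'_sum_pi A (fun i b => J i (s i) b + γ * ∑ y : S i, P i (s i) b y * Vistar i y)]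
    exact Finset.sum_congr rfl fun i _ => hVistar i (s i)
  -- W satisfies the product policy-evaluation equation
  have fact4 : ∀ s : ∀ i, S i,
      W s = (∑ i, J i (s i) (π i (s i))) +
        γ * ∑ s' : ∀ i, S i, (∏ i, P i (s i) (π i (s i)) (s' i)) * W s' := by
    intro s
    rw [fact1 s (fun i => π i (s i)), Finset.mul_sum, ← Finset.sum_add_distrib]
    exact Finset.sum_congr rfl fun i _ => hVistarπ i (s i)
  -- Vstar = W by contraction
  have hVstarW : ∀ s, Vstar s = W s := by
    apply my_contraction_eq γ hγ1
    intro s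
    rw [hVstar s, fact3 s]
    apply my_abs_inf'_sub_le
    intro a
    have hdiff : ((∑ i, J i (s i) (a i)) +
          γ * ∑ s' : ∀ i, S i, (∏ i, P i (s i) (a i) (s' i)) * Vstar s')
        - ((∑ i, J i (s i) (a i)) +
          γ * ∑ s' : ∀ i, S i, (∏ i, P i (s i) (a i) (s' i)) * W s')
        = γ * ∑ s' : ∀ i, S i, (∏ i, P i (s i) (a i) (s' i)) * (Vstar s' - W s') := by
      rw [Finset.mul_sum]
      simp only [mul_sub, Finset.sum_sub_distrib, Finset.mul_sum]
      ring
    rw [hdiff, abs_mul, abs_of_nonneg hγ0]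
    apply mul_le_mul_of_nonneg_left _ hγ0
    exact my_weighted_abs_le _ _ _ (hprob0 s a) (hprob1 s a)
      (fun s' => Finset.le_sup' (fun t => |Vstar t - W t|) (Finset.mem_univ s'))
  -- Vπ = W by contraction
  have hVπW : ∀ s, Vπ s = W s := by
    apply my_contraction_eq γ hγ1
    intro s
    have hdiff : Vπ s - W s
        = γ * ∑ s' : ∀ i, S i, (∏ i, P i (s i) (π i (s i)) (s' i)) * (Vπ s' - W s') := by
      rw [hVπ s]
      nth_rewrite 1 [fact4 s]
      rw [Finset.mul_sum]
      simp only [mul_sub, Finset.sum_sub_distrib, Finset.mul_sum]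
      ring
    rw [hdiff, abs_mul, abs_of_nonneg hγ0]
    apply mul_le_mul_of_nonneg_left _ hγ0
    exact my_weighted_abs_le _ _ _ (hprob0 s _) (hprob1 s _)
      (fun s' => Finset.le_sup' (fun t => |Vπ t - W t|) (Finset.mem_univ s'))
  exact ⟨fun s => (hVπW s).trans (hVstarW s).symm, fun s => hVstarW s⟩
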